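/- Let 1/p + 1/p̃ = 1/q + 1/q̃ = 1/r, with r ≤ p < ∞, r ≤ q ≤ ∞ and 1 ≤ r < ∞. There is a constant 0 < C < ∞ such that for all measurable functions f, g on ℝ^{1+n}_+, one has ‖fg‖_{L_r(ℝ^{1+n}_+)} ≤ C ‖N_{L_q} f‖_{L_p(ℝ^n)} ‖C^r_{L_{q̃}} g‖_{L_{p̃}(ℝ^n)}. -/

import Mathlib

open MeasureTheory ENNReal

noncomputable section

/-- Index set for dyadic cubes in `ℝⁿ`: scale `j : ℤ` and position `k : ℤⁿ`. -/
abbrev DIdx (n : ℕ) := ℤ × (Fin n → ℤ)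

/-- The open dyadic cube `2⁻ʲ(0,1)ⁿ + 2⁻ʲ k`; its sidelength is `2⁻ʲ`. -/
def dcube (n : ℕ) (Q : DIdx n) : Set (EuclideanSpace ℝ (Fin n)) :=
  {x | ∀ i, (2:ℝ) ^ (-Q.1) * (Q.2 i : ℝ) < x i ∧ x i < (2:ℝ) ^ (-Q.1) * ((Q.2 i : ℝ) + 1)}

/-- The dyadic Whitney region `W_Q = (ℓ(Q)/2, ℓ(Q)) × Q` in the half-space. -/
def whit (n : ℕ) (Q : DIdx n) : Set (ℝ × EuclideanSpace ℝ (Fin n)) :=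
  Set.Ioo ((2:ℝ) ^ (-Q.1) / 2) ((2:ℝ) ^ (-Q.1)) ×ˢ dcube n Q

/-- The upper half-space `ℝ^{1+n}_+`. -/
def halfSpace (n : ℕ) : Set (ℝ × EuclideanSpace ℝ (Fin n)) := {w | 0 < w.1}

/-- The `L_p` norm (valued in `ℝ≥0∞`) of an `ℝ≥0∞`-valued function. -/
def eLp {α : Type*} [MeasurableSpace α] (p : ℝ≥0∞) (F : α → ℝ≥0∞) (μ : Measure α) : ℝ≥0∞ :=
  if p = ∞ then essSup F μ else (∫⁻ x, F x ^ p.toReal ∂μ) ^ p.toReal⁻¹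

/-- The dyadic non-tangential maximal function
`N_{L_q} f(x) = sup_{Q ∋ x} |W_Q|^{-1/q} ‖f‖_{L_q(W_Q)}`. -/
def NLq (n : ℕ) (q : ℝ≥0∞) (f : ℝ × EuclideanSpace ℝ (Fin n) → ℝ)
    (x : EuclideanSpace ℝ (Fin n)) : ℝ≥0∞ :=
  ⨆ Q, ⨆ (_ : x ∈ dcube n Q),
    volume (whit n Q) ^ (-(1/q).toReal) * eLpNorm f q (volume.restrict (whit n Q))

/-- The dyadic Carleson functional
`C^r_{L_q} g(x) = sup_{Q ∋ x} (|Q|⁻¹ ∑_{R ⊆ Q} |W_R| (|W_R|^{-1/q} ‖g‖_{L_q(W_R)})^r)^{1/r}`. -/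
def CrLq (n : ℕ) (r q : ℝ≥0∞) (g : ℝ × EuclideanSpace ℝ (Fin n) → ℝ)
    (x : EuclideanSpace ℝ (Fin n)) : ℝ≥0∞ :=
  ⨆ Q, ⨆ (_ : x ∈ dcube n Q),
    ((volume (dcube n Q))⁻¹ *
      ∑' R : {R : DIdx n // dcube n R ⊆ dcube n Q},
        volume (whit n R.1) *
          (volume (whit n R.1) ^ (-(1/q).toReal) *
            eLpNorm g q (volume.restrict (whit n R.1))) ^ r.toReal) ^ r.toReal⁻¹

namespace Stmt3Aux

variable {n : ℕ}

lemma two_zpow_pos (j : ℤ) : (0:ℝ) < 2 ^ j := zpow_pos (by norm_num) j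

lemma dcube_eq_iInter (Q : DIdx n) :
    dcube n Q = ⋂ i, (fun x : EuclideanSpace ℝ (Fin n) => x i) ⁻¹'
      (Set.Ioo ((2:ℝ) ^ (-Q.1) * Q.2 i) ((2:ℝ) ^ (-Q.1) * (Q.2 i + 1))) := by
  ext x
  simp [dcube, Set.mem_iInter]

lemma measurableSet_dcube (Q : DIdx n) : MeasurableSet (dcube n Q) := by
  rw [dcube_eq_iInter]
  exact MeasurableSet.iInter fun i =>
    ((measurable_pi_apply i).comp (MeasurableEquiv.toLp 2 (Fin n → ℝ)).symm.measurable) measurableSet_Ioo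

lemma measurableSet_whit (Q : DIdx n) : MeasurableSet (whit n Q) :=
  measurableSet_Ioo.prod (measurableSet_dcube Q)

lemma dcube_as_pi (Q : DIdx n) :
    (dcube n Q : Set (EuclideanSpace ℝ (Fin n))) =
      (⇑(MeasurableEquiv.toLp 2 (Fin n → ℝ)).symm ⁻¹'
        (Set.univ.pi fun i => Set.Ioo ((2:ℝ) ^ (-Q.1) * Q.2 i) ((2:ℝ) ^ (-Q.1) * (Q.2 i + 1)))) := by
  ext x
  simp [dcube, Set.mem_pi, MeasurableEquiv.coe_toLp_symm]

lemma volume_dcube (Q : DIdx n) :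
    volume (dcube n Q) = ENNReal.ofReal ((2:ℝ) ^ (-Q.1)) ^ n := by
  rw [dcube_as_pi]
  rw [(EuclideanSpace.volume_preserving_symm_measurableEquiv_toLp (Fin n)).measure_preimage
    ((MeasurableSet.univ_pi fun i => measurableSet_Ioo).nullMeasurableSet)]
  rw [volume_pi_pi]
  have : ∀ i : Fin n, volume (Set.Ioo ((2:ℝ) ^ (-Q.1) * Q.2 i) ((2:ℝ) ^ (-Q.1) * (Q.2 i + 1)))
      = ENNReal.ofReal ((2:ℝ) ^ (-Q.1)) := by
    intro i
    rw [Real.volume_Ioo]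
    congr 1
    ring
  simp only [this, Finset.prod_const, Finset.card_univ, Fintype.card_fin]

lemma volume_dcube_pos (Q : DIdx n) : 0 < volume (dcube n Q) := by
  rw [volume_dcube]
  exact ENNReal.pow_pos (ENNReal.ofReal_pos.2 (two_zpow_pos _)) n

lemma volume_dcube_ne_top (Q : DIdx n) : volume (dcube n Q) ≠ ∞ := by
  rw [volume_dcube]
  exact pow_ne_top ofReal_ne_top

lemma volume_whit (Q : DIdx n) :
    volume (whit n Q) =
      ENNReal.ofReal ((2:ℝ) ^ (-Q.1) / 2) * ENNReal.ofReal ((2:ℝ) ^ (-Q.1)) ^ n := by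
  rw [whit, Measure.volume_eq_prod, Measure.prod_prod, Real.volume_Ioo, ← volume_dcube]
  congr 2
  ring

lemma volume_whit_pos (Q : DIdx n) : 0 < volume (whit n Q) := by
  rw [volume_whit]
  refine ENNReal.mul_pos ?_ ?_
  · exact (ENNReal.ofReal_pos.2 (by have := two_zpow_pos (-Q.1); linarith)).ne'
  · exact (ENNReal.pow_pos (ENNReal.ofReal_pos.2 (two_zpow_pos _)) n).ne'

lemma volume_whit_ne_top (Q : DIdx n) : volume (whit n Q) ≠ ∞ := by
  rw [volume_whit]
  exact mul_ne_top ofReal_ne_top (pow_ne_top ofReal_ne_top)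


/-- 1-d dyadic interval nesting: if two dyadic intervals overlap and the first has the
larger-or-equal scale index (smaller sidelength), the first is contained in the second. -/
lemma interval_nest {j1 j2 : ℤ} (hj : j2 ≤ j1) {k1 k2 : ℤ} {t : ℝ}
    (h1 : (2:ℝ) ^ (-j1) * k1 < t ∧ t < (2:ℝ) ^ (-j1) * (k1 + 1))
    (h2 : (2:ℝ) ^ (-j2) * k2 < t ∧ t < (2:ℝ) ^ (-j2) * (k2 + 1)) :
    ∀ s : ℝ, (2:ℝ) ^ (-j1) * k1 < s ∧ s < (2:ℝ) ^ (-j1) * (k1 + 1) →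
      (2:ℝ) ^ (-j2) * k2 < s ∧ s < (2:ℝ) ^ (-j2) * (k2 + 1) := by
  set c : ℝ := (2:ℝ) ^ (-j1) with hc
  have hcpos : 0 < c := two_zpow_pos _
  set N : ℤ := 2 ^ (j1 - j2).toNat with hN
  have hNr : ((N:ℝ)) = (2:ℝ) ^ (j1 - j2) := by
    rw [hN]
    push_cast
    rw [← zpow_natCast (2:ℝ) (j1 - j2).toNat, Int.toNat_of_nonneg (by omega)]
  have hc2 : (2:ℝ) ^ (-j2) = c * N := by
    rw [hc, hNr, ← zpow_add₀ (by norm_num : (2:ℝ) ≠ 0)]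
    congr 1
    omega
  rw [hc2] at h2 ⊢
  have hb1 : c * ((N:ℝ) * k2) < c * (k1 + 1) := by
    calc c * ((N:ℝ) * k2) = c * N * k2 := by ring
    _ < t := h2.1
    _ < c * (k1 + 1) := h1.2
  have hb2 : c * (k1:ℝ) < c * ((N:ℝ) * (k2 + 1)) := by
    calc c * (k1:ℝ) < t := h1.1
    _ < c * N * (k2 + 1) := h2.2
    _ = c * ((N:ℝ) * (k2 + 1)) := by ring
  have hi1 : (N * k2 : ℤ) < k1 + 1 := by
    have := (mul_lt_mul_iff_right₀ hcpos).1 hb1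
    exact_mod_cast this
  have hi2 : (k1 : ℤ) < N * (k2 + 1) := by
    have := (mul_lt_mul_iff_right₀ hcpos).1 hb2
    exact_mod_cast this
  have hi1' : (N * k2 : ℤ) ≤ k1 := by omega
  have hi2' : (k1 + 1 : ℤ) ≤ N * (k2 + 1) := by omega
  intro s hs
  constructor
  · calc c * N * k2 = c * ((N * k2 : ℤ) : ℝ) := by push_cast; ring
    _ ≤ c * (k1 : ℝ) := by
        apply mul_le_mul_of_nonneg_left _ hcpos.le
        exact_mod_cast hi1'
    _ < s := hs.1
  · calc s < c * ((k1:ℝ) + 1) := hs.2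
    _ = c * (((k1 + 1 : ℤ)) : ℝ) := by push_cast; ring
    _ ≤ c * (((N * (k2 + 1) : ℤ)) : ℝ) := by
        apply mul_le_mul_of_nonneg_left _ hcpos.le
        exact_mod_cast hi2'
    _ = c * N * ((k2:ℝ) + 1) := by push_cast; ring

/-- Dyadic cube nesting: overlapping cubes are nested (the one with larger scale index,
i.e. smaller sidelength, is inside the other). -/
lemma dcube_nest {Q R : DIdx n} (hj : R.1 ≤ Q.1) (hx : (dcube n Q ∩ dcube n R).Nonempty) :
    dcube n Q ⊆ dcube n R := by
  obtain ⟨t, htQ, htR⟩ := hx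
  intro y hy i
  exact interval_nest hj (htQ i) (htR i) (y i) (hy i)

/-- Two overlapping dyadic cubes with the same scale coincide. -/
lemma dcube_same_scale {Q R : DIdx n} (hj : Q.1 = R.1)
    (hx : (dcube n Q ∩ dcube n R).Nonempty) : Q = R := by
  obtain ⟨t, htQ, htR⟩ := hx
  have hk : Q.2 = R.2 := by
    funext i
    have h1 := htQ i
    have h2 := htR i
    rw [hj] at h1
    have hcpos : (0:ℝ) < (2:ℝ) ^ (-R.1) := two_zpow_pos _
    have e1 : (Q.2 i : ℝ) < R.2 i + 1 := by
      have := h1.1.trans h2.2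
      exact (mul_lt_mul_iff_right₀ hcpos).1 this
    have e2 : (R.2 i : ℝ) < Q.2 i + 1 := by
      have := h2.1.trans h1.2
      exact (mul_lt_mul_iff_right₀ hcpos).1 this
    have e1' : (Q.2 i : ℤ) < R.2 i + 1 := by exact_mod_cast e1
    have e2' : (R.2 i : ℤ) < Q.2 i + 1 := by exact_mod_cast e2
    omega
  exact Prod.ext hj hk

/-- The center of a dyadic cube. -/
def dcenter (Q : DIdx n) : EuclideanSpace ℝ (Fin n) :=
  WithLp.toLp 2 (fun i => (2:ℝ) ^ (-Q.1) * Q.2 i + (2:ℝ) ^ (-Q.1) / 2)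

lemma dcenter_mem (Q : DIdx n) : dcenter Q ∈ dcube n Q := by
  intro i
  have hcpos : (0:ℝ) < (2:ℝ) ^ (-Q.1) := two_zpow_pos _
  constructor
  · simp only [dcenter, WithLp.ofLp_toLp]
    linarith
  · simp only [dcenter, WithLp.ofLp_toLp]
    have : (2:ℝ) ^ (-Q.1) * (Q.2 i + 1) = (2:ℝ) ^ (-Q.1) * Q.2 i + (2:ℝ) ^ (-Q.1) := by ring
    rw [this]
    linarith

lemma dcube_nonempty (Q : DIdx n) : (dcube n Q).Nonempty := ⟨dcenter Q, dcenter_mem Q⟩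

/-- For `n ≥ 1`, if one dyadic cube is contained in another then its scale index
is at least as large (its sidelength is at most as large). -/
lemma scale_le_of_subset (hn : 0 < n) {Q R : DIdx n} (h : dcube n Q ⊆ dcube n R) :
    R.1 ≤ Q.1 := by
  by_contra hlt
  push_neg at hlt
  -- Q has strictly bigger sidelength than R; compare the first coordinate intervals.
  set i : Fin n := ⟨0, hn⟩
  have hsub : Set.Ioo ((2:ℝ) ^ (-Q.1) * Q.2 i) ((2:ℝ) ^ (-Q.1) * (Q.2 i + 1)) ⊆
      Set.Ioo ((2:ℝ) ^ (-R.1) * R.2 i) ((2:ℝ) ^ (-R.1) * (R.2 i + 1)) := by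
    intro s hs
    have hy : WithLp.toLp 2 (Function.update (dcenter Q).ofLp i s) ∈ dcube n Q := by
      intro j
      by_cases hji : j = i
      · subst hji
        simpa using hs
      · rw [WithLp.ofLp_toLp, Function.update_of_ne hji]
        exact dcenter_mem Q j
    have := h hy i
    simpa using this
  have hQlt : (2:ℝ) ^ (-Q.1) * Q.2 i < (2:ℝ) ^ (-Q.1) * (Q.2 i + 1) := by
    have hcpos : (0:ℝ) < (2:ℝ) ^ (-Q.1) := two_zpow_pos _
    nlinarith
  rw [Set.Ioo_subset_Ioo_iff hQlt] at hsub
  have hlen : (2:ℝ) ^ (-Q.1) ≤ (2:ℝ) ^ (-R.1) := by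
    have h1 := hsub.1
    have h2 := hsub.2
    nlinarith
  have : -Q.1 ≤ -R.1 := (zpow_le_zpow_iff_right₀ (by norm_num : (1:ℝ) < 2)).1 hlen
  omega

/-- For `n ≥ 1`, `dcube` is injective on indices once the cubes coincide as sets
(consequence of the previous lemmas). -/
lemma dcube_eq_index (hn : 0 < n) {Q R : DIdx n} (h : dcube n Q = dcube n R) : Q = R := by
  have h1 : R.1 ≤ Q.1 := scale_le_of_subset hn h.le
  have h2 : Q.1 ≤ R.1 := scale_le_of_subset hn h.ge
  refine dcube_same_scale (le_antisymm h2 h1) ?_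
  obtain ⟨x, hx⟩ := dcube_nonempty Q
  exact ⟨x, hx, h ▸ hx⟩


lemma hyperplane_null (i : Fin n) (d : ℝ) :
    volume {x : EuclideanSpace ℝ (Fin n) | x i = d} = 0 := by
  classical
  have hset : {x : EuclideanSpace ℝ (Fin n) | x i = d} =
      (⇑(MeasurableEquiv.toLp 2 (Fin n → ℝ)).symm ⁻¹'
        (Set.univ.pi fun j => if j = i then ({d} : Set ℝ) else Set.univ)) := by
    ext x
    simp only [Set.mem_setOf_eq, Set.mem_preimage, Set.mem_pi, Set.mem_univ, true_implies]
    constructor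
    · intro h j
      by_cases hj : j = i
      · subst hj; simp [MeasurableEquiv.coe_toLp_symm, h]
      · simp [hj]
    · intro h
      have := h i
      simpa [MeasurableEquiv.coe_toLp_symm] using this
  rw [hset]
  rw [(EuclideanSpace.volume_preserving_symm_measurableEquiv_toLp (Fin n)).measure_preimage
    ((MeasurableSet.univ_pi fun j => by
      by_cases hj : j = i <;> simp [hj]).nullMeasurableSet)]
  rw [volume_pi_pi]
  refine Finset.prod_eq_zero (Finset.mem_univ i) ?_
  simp

lemma slice1_null (c : ℝ) : volume {w : ℝ × EuclideanSpace ℝ (Fin n) | w.1 = c} = 0 := by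
  have hset : {w : ℝ × EuclideanSpace ℝ (Fin n) | w.1 = c} =
      ({c} : Set ℝ) ×ˢ (Set.univ : Set (EuclideanSpace ℝ (Fin n))) := by
    ext ⟨t, x⟩
    simp [Set.mem_prod, eq_comm]
  rw [hset, Measure.volume_eq_prod, Measure.prod_prod]
  simp

lemma slice2_null (i : Fin n) (d : ℝ) :
    volume {w : ℝ × EuclideanSpace ℝ (Fin n) | w.2 i = d} = 0 := by
  have hset : {w : ℝ × EuclideanSpace ℝ (Fin n) | w.2 i = d} =
      (Set.univ : Set ℝ) ×ˢ {x : EuclideanSpace ℝ (Fin n) | x i = d} := by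
    ext ⟨t, x⟩
    simp [Set.mem_prod]
  rw [hset, Measure.volume_eq_prod, Measure.prod_prod, hyperplane_null]
  simp

/-- The null "bad set" off which the Whitney regions cover the half-space. -/
def Zbad (n : ℕ) : Set (ℝ × EuclideanSpace ℝ (Fin n)) :=
  (⋃ j : ℤ, {w | w.1 = (2:ℝ) ^ (-j)}) ∪
    ⋃ j : ℤ, ⋃ i : Fin n, ⋃ m : ℤ, {w | w.2 i = (2:ℝ) ^ (-j) * m}

lemma Zbad_null : volume (Zbad n) = 0 := by
  refine measure_union_null (measure_iUnion_null fun j => slice1_null _)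
    (measure_iUnion_null fun j => measure_iUnion_null fun i => measure_iUnion_null fun m =>
      slice2_null _ _)

lemma halfSpace_cover : halfSpace n ⊆ (⋃ Q : DIdx n, whit n Q) ∪ Zbad n := by
  rintro ⟨t, x⟩ hw
  by_cases hz : (t, x) ∈ Zbad n
  · exact Or.inr hz
  refine Or.inl ?_
  have ht : 0 < t := hw
  have ht1 : ∀ j : ℤ, t ≠ (2:ℝ) ^ (-j) := by
    intro j hj
    exact hz (Or.inl (Set.mem_iUnion.2 ⟨j, hj⟩))
  have ht2 : ∀ (j : ℤ) (i : Fin n) (m : ℤ), x i ≠ (2:ℝ) ^ (-j) * m := by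
    intro j i m hm
    exact hz (Or.inr (Set.mem_iUnion.2 ⟨j, Set.mem_iUnion.2 ⟨i, Set.mem_iUnion.2 ⟨m, hm⟩⟩⟩))
  set m : ℤ := ⌊Real.logb 2 t⌋ with hm
  set j : ℤ := -(m + 1) with hj
  set c : ℝ := (2:ℝ) ^ (-j) with hc
  have hcm : c = (2:ℝ) ^ (m + 1) := by rw [hc, hj]; norm_num
  have hcpos : 0 < c := two_zpow_pos _
  have hlogt : (2:ℝ) ^ (Real.logb 2 t) = t := Real.rpow_logb (by norm_num) (by norm_num) ht
  have hlow : (2:ℝ) ^ m ≤ t := by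
    have h1 : (m:ℝ) ≤ Real.logb 2 t := Int.floor_le _
    calc (2:ℝ) ^ m = (2:ℝ) ^ ((m:ℝ)) := by rw [← Real.rpow_intCast]
    _ ≤ (2:ℝ) ^ (Real.logb 2 t) :=
        (Real.rpow_le_rpow_left_iff (by norm_num : (1:ℝ) < 2)).2 h1
    _ = t := hlogt
  have hlow' : (2:ℝ) ^ m < t := by
    refine lt_of_le_of_ne hlow ?_
    intro h
    exact ht1 (-m) (by rw [← h]; norm_num)
  have hupp : t < (2:ℝ) ^ (m + 1) := by
    have h1 : Real.logb 2 t < ((m:ℝ) + 1) := Int.lt_floor_add_one _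
    calc t = (2:ℝ) ^ (Real.logb 2 t) := hlogt.symm
    _ < (2:ℝ) ^ ((m:ℝ) + 1) :=
        (Real.rpow_lt_rpow_left_iff (by norm_num : (1:ℝ) < 2)).2 h1
    _ = (2:ℝ) ^ (m + 1) := by
        rw [← Real.rpow_intCast]
        push_cast
        ring_nf
  have htmem : t ∈ Set.Ioo (c / 2) c := by
    constructor
    · have : c / 2 = (2:ℝ) ^ m := by
        rw [hcm, zpow_add₀ (by norm_num : (2:ℝ) ≠ 0)]
        norm_num
      rw [this]; exact hlow'
    · rw [hcm]; exact hupp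
  set k : Fin n → ℤ := fun i => ⌊x i / c⌋ with hk
  refine Set.mem_iUnion.2 ⟨(j, k), ?_⟩
  refine Set.mem_prod.2 ⟨htmem, ?_⟩
  intro i
  have hfl : (k i : ℝ) ≤ x i / c := Int.floor_le _
  have hfu : x i / c < k i + 1 := Int.lt_floor_add_one _
  have h1 : c * k i ≤ x i := by
    have := (le_div_iff₀ hcpos).1 hfl
    linarith
  have h1' : c * k i < x i := lt_of_le_of_ne h1 fun h => ht2 j i (k i) (by rw [← h])
  have h2 : x i < c * (k i + 1) := by
    have := (div_lt_iff₀ hcpos).1 hfu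
    calc x i < (↑(k i) + 1) * c := this
    _ = c * (k i + 1) := by ring
  exact ⟨h1', h2⟩

/-- Splitting the integral over the half-space into Whitney regions. -/
lemma lintegral_halfSpace_le (F : ℝ × EuclideanSpace ℝ (Fin n) → ℝ≥0∞) :
    ∫⁻ w in halfSpace n, F w ≤ ∑' Q : DIdx n, ∫⁻ w in whit n Q, F w := by
  calc ∫⁻ w in halfSpace n, F w
      ≤ ∫⁻ w in (⋃ Q : DIdx n, whit n Q) ∪ Zbad n, F w :=
        lintegral_mono' (Measure.restrict_mono halfSpace_cover le_rfl) le_rfl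
    _ ≤ (∫⁻ w in ⋃ Q : DIdx n, whit n Q, F w) + ∫⁻ w in Zbad n, F w :=
        lintegral_union_le _ _ _
    _ = ∫⁻ w in ⋃ Q : DIdx n, whit n Q, F w := by
        rw [setLIntegral_measure_zero _ _ Zbad_null, add_zero]
    _ ≤ ∑' Q : DIdx n, ∫⁻ w in whit n Q, F w := lintegral_iUnion_le _ _


lemma measurable_sup_ind (A : DIdx n → ℝ≥0∞) :
    Measurable (fun x : EuclideanSpace ℝ (Fin n) => ⨆ Q, ⨆ (_ : x ∈ dcube n Q), A Q) := by
  refine Measurable.iSup fun Q => ?_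
  have h : (fun x : EuclideanSpace ℝ (Fin n) => ⨆ (_ : x ∈ dcube n Q), A Q)
      = (dcube n Q).indicator (fun _ => A Q) := by
    funext x
    by_cases hx : x ∈ dcube n Q <;> simp [hx]
  rw [h]
  exact measurable_const.indicator (measurableSet_dcube Q)

lemma measurable_NLq (q : ℝ≥0∞) (f : ℝ × EuclideanSpace ℝ (Fin n) → ℝ) :
    Measurable (NLq n q f) :=
  measurable_sup_ind _

lemma measurable_CrLq (r q : ℝ≥0∞) (g : ℝ × EuclideanSpace ℝ (Fin n) → ℝ) :
    Measurable (CrLq n r q g) :=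
  measurable_sup_ind _

lemma volume_layer (a : ℝ≥0∞) :
    volume {l : ℝ | 0 < l ∧ ENNReal.ofReal l < a} = a := by
  rcases eq_or_ne a ∞ with ha | ha
  · have h : {l : ℝ | 0 < l ∧ ENNReal.ofReal l < a} = Set.Ioi 0 := by
      ext l
      simp [ha]
    rw [h, ha]
    exact Real.volume_Ioi
  · have h : {l : ℝ | 0 < l ∧ ENNReal.ofReal l < a} = Set.Ioo 0 a.toReal := by
      ext l
      simp only [Set.mem_setOf_eq, Set.mem_Ioo]
      exact and_congr_right fun h1 => ENNReal.ofReal_lt_iff_lt_toReal h1.le ha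
    rw [h, Real.volume_Ioo, sub_zero, ENNReal.ofReal_toReal ha]

lemma measurableSet_layer (a : ℝ≥0∞) :
    MeasurableSet {l : ℝ | 0 < l ∧ ENNReal.ofReal l < a} := by
  have h : {l : ℝ | 0 < l ∧ ENNReal.ofReal l < a}
      = Set.Ioi 0 ∩ ENNReal.ofReal ⁻¹' (Set.Iio a) := rfl
  rw [h]
  exact measurableSet_Ioi.inter (ENNReal.measurable_ofReal measurableSet_Iio)

/-- Hölder's inequality on a single Whitney region, in normalized form. -/
lemma cube_holder {q qtil r : ℝ≥0∞} (hr1 : 1 ≤ r) (hrtop : r ≠ ∞)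
    (hq0 : q ≠ 0) (hqtil0 : qtil ≠ 0) (hqconj : 1/q + 1/qtil = 1/r)
    (f g : ℝ × EuclideanSpace ℝ (Fin n) → ℝ)
    (hf : Measurable f) (hg : Measurable g) (Q : DIdx n) :
    (∫⁻ w in whit n Q, (‖f w * g w‖₊ : ℝ≥0∞) ^ r.toReal) ≤
      volume (whit n Q) *
        ((volume (whit n Q) ^ (-(1/q).toReal) *
          eLpNorm f q (volume.restrict (whit n Q))) ^ r.toReal) *
        ((volume (whit n Q) ^ (-(1/qtil).toReal) *
          eLpNorm g qtil (volume.restrict (whit n Q))) ^ r.toReal) := by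
  set μ := volume.restrict (whit n Q) with hμ
  set v := volume (whit n Q) with hv
  have hv0 : v ≠ 0 := (volume_whit_pos Q).ne'
  have hvtop : v ≠ ∞ := volume_whit_ne_top Q
  have hr0 : r ≠ 0 := by
    intro h
    rw [h] at hr1
    simp at hr1
  set ρ := r.toReal with hρ
  have hρ0 : ρ ≠ 0 := ENNReal.toReal_ne_zero.2 ⟨hr0, hrtop⟩
  have hρnn : 0 ≤ ρ := ENNReal.toReal_nonneg
  set α := (1/q).toReal with hα
  set β := (1/qtil).toReal with hβ
  have hαβ : α + β = ρ⁻¹ := by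
    rw [hα, hβ, ← ENNReal.toReal_add (by simp [hq0]) (by simp [hqtil0]), hqconj,
      one_div, ENNReal.toReal_inv]
  have hHolder0 : eLpNorm (f • g) r μ ≤ eLpNorm f q μ * eLpNorm g qtil μ := by
    haveI : ENNReal.HolderTriple q qtil r := ⟨by simpa [one_div] using hqconj⟩
    exact eLpNorm_smul_le_mul_eLpNorm (E := ℝ) (𝕜 := ℝ) hg.aestronglyMeasurable
      hf.aestronglyMeasurable
  have hHolder : eLpNorm (fun w => f w * g w) r μ ≤ eLpNorm f q μ * eLpNorm g qtil μ := by
    have hfg : (fun w => f w * g w) = f • g := rfl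
    rw [hfg]
    exact hHolder0
  have hInt : (∫⁻ w in whit n Q, (‖f w * g w‖₊ : ℝ≥0∞) ^ ρ)
      = eLpNorm (fun w => f w * g w) r μ ^ ρ := by
    rw [eLpNorm_eq_lintegral_rpow_enorm_toReal hr0 hrtop]
    simp only [enorm_eq_nnnorm]
    rw [← ENNReal.rpow_mul, one_div,
      inv_mul_cancel₀ hρ0, ENNReal.rpow_one]
  have hfA : eLpNorm f q μ = v ^ α * (v ^ (-α) * eLpNorm f q μ) := by
    rw [← mul_assoc, ← ENNReal.rpow_add _ _ hv0 hvtop, add_neg_cancel, ENNReal.rpow_zero,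
      one_mul]
  have hgB : eLpNorm g qtil μ = v ^ β * (v ^ (-β) * eLpNorm g qtil μ) := by
    rw [← mul_assoc, ← ENNReal.rpow_add _ _ hv0 hvtop, add_neg_cancel, ENNReal.rpow_zero,
      one_mul]
  set A := v ^ (-α) * eLpNorm f q μ with hA
  set B := v ^ (-β) * eLpNorm g qtil μ with hB
  calc (∫⁻ w in whit n Q, (‖f w * g w‖₊ : ℝ≥0∞) ^ ρ)
      = eLpNorm (fun w => f w * g w) r μ ^ ρ := hInt
    _ ≤ (eLpNorm f q μ * eLpNorm g qtil μ) ^ ρ := ENNReal.rpow_le_rpow hHolder hρnn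
    _ = ((v ^ α * A) * (v ^ β * B)) ^ ρ := by rw [← hfA, ← hgB]
    _ = ((v ^ α * v ^ β) * (A * B)) ^ ρ := by rw [mul_mul_mul_comm]
    _ = (v ^ (α + β) * (A * B)) ^ ρ := by rw [ENNReal.rpow_add _ _ hv0 hvtop]
    _ = (v ^ (α + β)) ^ ρ * (A * B) ^ ρ := ENNReal.mul_rpow_of_nonneg _ _ hρnn
    _ = v * (A * B) ^ ρ := by
        rw [← ENNReal.rpow_mul, hαβ, inv_mul_cancel₀ hρ0, ENNReal.rpow_one]
    _ = v * A ^ ρ * B ^ ρ := by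
        rw [ENNReal.mul_rpow_of_nonneg _ _ hρnn, mul_assoc]


/-- If the product `f*g` vanishes a.e. on every Whitney region, the `L_r` norm over the
half-space vanishes. -/
lemma lhs_zero {r : ℝ≥0∞} (hr0 : r ≠ 0) (hrtop : r ≠ ∞)
    {f g : ℝ × EuclideanSpace ℝ (Fin n) → ℝ}
    (hz : ∀ Q : DIdx n, (fun w => f w * g w) =ᵐ[volume.restrict (whit n Q)] 0) :
    eLpNorm (fun w => f w * g w) r (volume.restrict (halfSpace n)) = 0 := by
  have hρpos : 0 < r.toReal := ENNReal.toReal_pos hr0 hrtop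
  rw [eLpNorm_eq_lintegral_rpow_enorm_toReal hr0 hrtop]
  simp only [enorm_eq_nnnorm]
  have h0 : (∫⁻ w in halfSpace n, (‖f w * g w‖₊ : ℝ≥0∞) ^ r.toReal) = 0 := by
    refine le_antisymm ?_ zero_le
    refine le_trans (lintegral_halfSpace_le _) ?_
    have hQ : ∀ Q : DIdx n, (∫⁻ w in whit n Q, (‖f w * g w‖₊ : ℝ≥0∞) ^ r.toReal) = 0 := by
      intro Q
      have hae : (fun w => (‖f w * g w‖₊ : ℝ≥0∞) ^ r.toReal)
          =ᵐ[volume.restrict (whit n Q)] 0 := by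
        filter_upwards [hz Q] with w hw
        rw [Pi.zero_apply] at hw
        simp [hw, ENNReal.zero_rpow_of_pos hρpos]
      rw [lintegral_congr_ae hae]
      simp
    rw [tsum_congr hQ]
    simp
  rw [h0]
  rw [ENNReal.zero_rpow_of_pos (one_div_pos.2 hρpos)]

/-- If `F = 0` a.e., there is a point of any given dyadic cube where `F` vanishes. -/
lemma exists_zero_on_cube {F : EuclideanSpace ℝ (Fin n) → ℝ≥0∞}
    (hF : F =ᵐ[volume] 0) (Q : DIdx n) : ∃ x ∈ dcube n Q, F x = 0 := by
  by_contra h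
  push_neg at h
  have hsub : dcube n Q ⊆ {x | ¬ F x = (0 : EuclideanSpace ℝ (Fin n) → ℝ≥0∞) x} := by
    intro x hx
    simpa using h x hx
  have h0 : volume (dcube n Q) = 0 := measure_mono_null hsub (ae_iff.1 hF)
  exact (volume_dcube_pos Q).ne' h0

/-- The scales of dyadic cubes inside a set of finite measure are bounded below. -/
lemma scale_bdd (hn : 0 < n) {Ω : Set (EuclideanSpace ℝ (Fin n))} (hΩ : volume Ω ≠ ∞) :
    ∃ b : ℤ, ∀ Q : DIdx n, dcube n Q ⊆ Ω → b ≤ Q.1 := by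
  set V : ℝ≥0∞ := max 1 (volume Ω) with hV
  have hVtop : V ≠ ∞ := by
    rw [hV]
    simp [hΩ]
  obtain ⟨N, hN⟩ := pow_unbounded_of_one_lt V.toReal (by norm_num : (1:ℝ) < 2)
  refine ⟨-(N:ℤ), fun Q hQ => ?_⟩
  have hvol : volume (dcube n Q) ≤ volume Ω := measure_mono hQ
  rw [volume_dcube] at hvol
  set c : ℝ := (2:ℝ) ^ (-Q.1) with hc
  have hcpos : 0 < c := two_zpow_pos _
  have h1 : ENNReal.ofReal c ≤ V := by
    rcases le_or_gt (ENNReal.ofReal c) 1 with h | h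
    · exact h.trans (le_max_left _ _)
    · refine le_trans ?_ (le_max_right _ _)
      calc ENNReal.ofReal c ≤ ENNReal.ofReal c ^ n := le_self_pow₀ h.le (by omega)
      _ ≤ volume Ω := hvol
  have h2 : c ≤ V.toReal := by
    have h3 : ENNReal.ofReal c ≤ ENNReal.ofReal V.toReal := by rwa [ENNReal.ofReal_toReal hVtop]
    exact (ENNReal.ofReal_le_ofReal_iff ENNReal.toReal_nonneg).1 h3
  have h4 : c ≤ (2:ℝ) ^ (N:ℤ) := by
    rw [zpow_natCast]
    exact h2.trans hN.le
  have h5 : -Q.1 ≤ (N:ℤ) := (zpow_le_zpow_iff_right₀ (by norm_num : (1:ℝ) < 2)).1 h4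
  omega

/-- Every dyadic cube inside a set `Ω` of finite measure is contained in a maximal
dyadic cube inside `Ω` (for `n ≥ 1`). -/
lemma exists_maximal (hn : 0 < n) {Ω : Set (EuclideanSpace ℝ (Fin n))} (hΩ : volume Ω ≠ ∞)
    {Q : DIdx n} (hQ : dcube n Q ⊆ Ω) :
    ∃ P : DIdx n, dcube n Q ⊆ dcube n P ∧ dcube n P ⊆ Ω ∧
      ∀ Q' : DIdx n, dcube n P ⊆ dcube n Q' → dcube n Q' ⊆ Ω → Q' = P := by
  obtain ⟨b, hb⟩ := scale_bdd (n := n) hn hΩ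
  set Pred : ℤ → Prop := fun j => ∃ k : Fin n → ℤ,
    dcube n Q ⊆ dcube n (j, k) ∧ dcube n (j, k) ⊆ Ω with hPred
  have hbdd : ∃ b', ∀ z, Pred z → b' ≤ z := ⟨b, fun z hz => hb (z, hz.choose) hz.choose_spec.2⟩
  have hne : ∃ z, Pred z := ⟨Q.1, Q.2, by simp [hQ]⟩
  obtain ⟨j0, ⟨k0, hk01, hk02⟩, hleast⟩ := Int.exists_least_of_bdd hbdd hne
  refine ⟨(j0, k0), hk01, hk02, fun Q' hsub hsub' => ?_⟩
  have hQ'scale : j0 ≤ Q'.1 := hleast Q'.1 ⟨Q'.2, by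
    refine ⟨hk01.trans (by simpa using hsub), by simpa using hsub'⟩⟩
  have hinter : (dcube n Q' ∩ dcube n (j0, k0)).Nonempty := by
    obtain ⟨x, hx⟩ := dcube_nonempty (n := n) (j0, k0)
    exact ⟨x, hsub hx, hx⟩
  have hsub2 : dcube n Q' ⊆ dcube n (j0, k0) := dcube_nest hQ'scale hinter
  exact dcube_eq_index hn (le_antisymm hsub2 hsub)

/-- Dyadic Carleson embedding: the sum of Carleson coefficients over all cubes contained
in a finite-measure set `Ω` is dominated by the integral over `Ω` of any function
dominating the Carleson box averages. -/
lemma carleson_embed (hn : 0 < n) (c : DIdx n → ℝ≥0∞)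
    (k : EuclideanSpace ℝ (Fin n) → ℝ≥0∞)
    {Ω : Set (EuclideanSpace ℝ (Fin n))} (hΩ : volume Ω ≠ ∞)
    (hk : ∀ P : DIdx n, ∀ x ∈ dcube n P,
      (volume (dcube n P))⁻¹ * (∑' R : {R : DIdx n // dcube n R ⊆ dcube n P}, c R.1) ≤ k x) :
    (∑' Q : {Q : DIdx n // dcube n Q ⊆ Ω}, c Q.1) ≤ ∫⁻ x in Ω, k x := by
  classical
  set Max : Set (DIdx n) := {P | dcube n P ⊆ Ω ∧
    ∀ Q', dcube n P ⊆ dcube n Q' → dcube n Q' ⊆ Ω → Q' = P} with hMax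
  have hMsel : ∀ Q : {Q : DIdx n // dcube n Q ⊆ Ω}, ∃ P : DIdx n,
      dcube n Q.1 ⊆ dcube n P ∧ dcube n P ⊆ Ω ∧
      ∀ Q', dcube n P ⊆ dcube n Q' → dcube n Q' ⊆ Ω → Q' = P :=
    fun Q => exists_maximal hn hΩ Q.2
  choose M hM1 hM2 hM3 using hMsel
  set F : (Σ P : Max, {R : DIdx n // dcube n R ⊆ dcube n P.1}) → ℝ≥0∞ :=
    fun σ => c σ.2.1 with hF
  set ι : {Q : DIdx n // dcube n Q ⊆ Ω} →
      (Σ P : Max, {R : DIdx n // dcube n R ⊆ dcube n P.1}) :=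
    fun Q => ⟨⟨M Q, hM2 Q, hM3 Q⟩, ⟨Q.1, hM1 Q⟩⟩ with hι
  have hinj : Function.Injective ι := by
    intro a b h
    have h2 := congrArg (fun σ : (Σ P : Max, {R : DIdx n // dcube n R ⊆ dcube n P.1}) =>
      (σ.2.1 : DIdx n)) h
    exact Subtype.ext h2
  calc (∑' Q : {Q : DIdx n // dcube n Q ⊆ Ω}, c Q.1)
      = ∑' Q : {Q : DIdx n // dcube n Q ⊆ Ω}, F (ι Q) := rfl
    _ ≤ ∑' σ, F σ := ENNReal.tsum_comp_le_tsum_of_injective hinj F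
    _ = ∑' P : Max, ∑' R : {R : DIdx n // dcube n R ⊆ dcube n P.1}, c R.1 :=
        ENNReal.tsum_sigma' _
    _ ≤ ∑' P : Max, ∫⁻ x in dcube n P.1, k x := by
        refine ENNReal.tsum_le_tsum fun P => ?_
        set S := ∑' R : {R : DIdx n // dcube n R ⊆ dcube n P.1}, c R.1 with hS
        set v := volume (dcube n P.1) with hv
        have hv0 : v ≠ 0 := (volume_dcube_pos _).ne'
        have hvtop : v ≠ ∞ := volume_dcube_ne_top _
        calc S = v * (v⁻¹ * S) := by
              rw [← mul_assoc, ENNReal.mul_inv_cancel hv0 hvtop, one_mul]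
          _ = (v⁻¹ * S) * v := mul_comm _ _
          _ = ∫⁻ _ in dcube n P.1, (v⁻¹ * S) := (setLIntegral_const _ _).symm
          _ ≤ ∫⁻ x in dcube n P.1, k x := by
              refine lintegral_mono_ae ?_
              rw [ae_restrict_iff' (measurableSet_dcube _)]
              exact ae_of_all _ fun x hx => hk P.1 x hx
    _ = ∫⁻ x in ⋃ P : Max, dcube n P.1, k x := by
        refine (lintegral_iUnion (fun P => measurableSet_dcube _) ?_ k).symm
        intro P1 P2 hne
        rw [Function.onFun]
        by_contra hndis
        obtain ⟨x, hx1, hx2⟩ := Set.not_disjoint_iff_nonempty_inter.1 hndis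
        rcases le_total P1.1.1 P2.1.1 with hsc | hsc
        · have hsub : dcube n P2.1 ⊆ dcube n P1.1 := dcube_nest hsc ⟨x, hx2, hx1⟩
          exact hne (Subtype.ext (P2.2.2 P1.1 hsub P1.2.1))
        · have hsub : dcube n P1.1 ⊆ dcube n P2.1 := dcube_nest hsc ⟨x, hx1, hx2⟩
          exact hne (Subtype.ext (P1.2.2 P2.1 hsub P2.2.1).symm)
    _ ≤ ∫⁻ x in Ω, k x := by
        refine lintegral_mono' (Measure.restrict_mono ?_ le_rfl) le_rfl
        exact Set.iUnion_subset fun P => P.2.1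


end Stmt3Aux

open Stmt3Aux in
/-- Corollary 2.3(i): `‖fg‖_{L_r} ≤ C ‖N_{L_q} f‖_{L_p} ‖C^r_{L_q̃} g‖_{L_p̃}`. -/
theorem stmt3 (n : ℕ) (p ptil q qtil r : ℝ≥0∞)
    (hr1 : 1 ≤ r) (hrtop : r ≠ ∞) (hrp : r ≤ p) (hptop : p ≠ ∞) (hrq : r ≤ q)
    (hpconj : 1/p + 1/ptil = 1/r) (hqconj : 1/q + 1/qtil = 1/r) :
    ∃ C : ℝ, 0 < C ∧
      ∀ f g : ℝ × EuclideanSpace ℝ (Fin n) → ℝ, Measurable f → Measurable g →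
        eLpNorm (fun w => f w * g w) r (volume.restrict (halfSpace n)) ≤
          ENNReal.ofReal C * eLp p (NLq n q f) volume * eLp ptil (CrLq n r qtil g) volume := by
  classical
  refine ⟨1, one_pos, fun f g hf hg => ?_⟩
  rw [ENNReal.ofReal_one, one_mul]
  have hr0 : r ≠ 0 := by
    intro h
    rw [h] at hr1
    simp at hr1
  have hρpos : 0 < r.toReal := ENNReal.toReal_pos hr0 hrtop
  set ρ := r.toReal with hρdef
  have hρ0 : ρ ≠ 0 := hρpos.ne'
  have hρnn : (0:ℝ) ≤ ρ := hρpos.le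
  have hq0 : q ≠ 0 := by
    intro h
    rw [h, le_zero_iff] at hrq
    exact hr0 hrq
  have hqtil0 : qtil ≠ 0 := by
    intro h
    rw [h] at hqconj
    have h2 : (1:ℝ≥0∞)/r = ∞ := by
      rw [← hqconj, ENNReal.div_zero one_ne_zero, add_top]
    rw [one_div, ENNReal.inv_eq_top] at h2
    exact hr0 h2
  have hp0 : p ≠ 0 := by
    intro h
    rw [h, le_zero_iff] at hrp
    exact hr0 hrp
  have hptil0 : ptil ≠ 0 := by
    intro h
    rw [h] at hpconj
    have h2 : (1:ℝ≥0∞)/r = ∞ := by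
      rw [← hpconj, ENNReal.div_zero one_ne_zero, add_top]
    rw [one_div, ENNReal.inv_eq_top] at h2
    exact hr0 h2
  set pt := p.toReal with hptdef
  have hptpos : 0 < pt := ENNReal.toReal_pos hp0 hptop
  set A : DIdx n → ℝ≥0∞ := fun Q =>
    volume (whit n Q) ^ (-(1/q).toReal) * eLpNorm f q (volume.restrict (whit n Q)) with hA
  set B : DIdx n → ℝ≥0∞ := fun Q =>
    volume (whit n Q) ^ (-(1/qtil).toReal) * eLpNorm g qtil (volume.restrict (whit n Q)) with hB
  set c : DIdx n → ℝ≥0∞ := fun Q => volume (whit n Q) * B Q ^ ρ with hc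
  have hNf_ge : ∀ (x : EuclideanSpace ℝ (Fin n)) (Q : DIdx n), x ∈ dcube n Q →
      A Q ≤ NLq n q f x := by
    intro x Q hx
    refine le_trans ?_ (le_iSup (fun Q => ⨆ (_ : x ∈ dcube n Q), A Q) Q)
    rw [iSup_pos hx]
  have hCg_ge : ∀ (x : EuclideanSpace ℝ (Fin n)) (P : DIdx n), x ∈ dcube n P →
      ((volume (dcube n P))⁻¹ *
        ∑' R : {R : DIdx n // dcube n R ⊆ dcube n P}, c R.1) ^ ρ⁻¹ ≤ CrLq n r qtil g x := by
    intro x P hx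
    refine le_trans ?_ (le_iSup (fun P => ⨆ (_ : x ∈ dcube n P),
        ((volume (dcube n P))⁻¹ *
          ∑' R : {R : DIdx n // dcube n R ⊆ dcube n P}, c R.1) ^ ρ⁻¹) P)
    rw [iSup_pos hx]
  have hcore : (∫⁻ w in halfSpace n, (‖f w * g w‖₊ : ℝ≥0∞) ^ ρ) ≤
      ∑' Q : DIdx n, volume (whit n Q) * A Q ^ ρ * B Q ^ ρ := by
    refine le_trans (lintegral_halfSpace_le _) (ENNReal.tsum_le_tsum fun Q => ?_)
    exact cube_holder hr1 hrtop hq0 hqtil0 hqconj f g hf hg Q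
  have hLHS : eLpNorm (fun w => f w * g w) r (volume.restrict (halfSpace n)) =
      (∫⁻ w in halfSpace n, (‖f w * g w‖₊ : ℝ≥0∞) ^ ρ) ^ ρ⁻¹ := by
    rw [eLpNorm_eq_lintegral_rpow_enorm_toReal hr0 hrtop]
    simp only [enorm_eq_nnnorm]
    rw [one_div]
  rcases Nat.eq_zero_or_pos n with hn0 | hn
  · -- dimension 0
    subst hn0
    have hmem0 : ∀ (x : EuclideanSpace ℝ (Fin 0)) (Q : DIdx 0), x ∈ dcube 0 Q :=
      fun x Q i => i.elim0
    have hsub0 : ∀ Q P : DIdx 0, dcube 0 Q ⊆ dcube 0 P := fun Q P x _ => hmem0 x P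
    haveI : Nonempty (DIdx 0) := ⟨(0, fun i => i.elim0)⟩
    have hvol1 : ∀ Q : DIdx 0, volume (dcube 0 Q) = 1 := fun Q => by
      rw [volume_dcube]
      simp
    have hEvol : volume (Set.univ : Set (EuclideanSpace ℝ (Fin 0))) = 1 := by
      have h1 := hvol1 (0, fun i => i.elim0)
      have h2 : dcube 0 (0, fun i => i.elim0) = Set.univ :=
        Set.eq_univ_of_forall fun x => hmem0 x _
      rwa [h2] at h1
    have hμ0 : (volume : Measure (EuclideanSpace ℝ (Fin 0))) ≠ 0 := by
      intro h
      rw [h] at hEvol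
      simp at hEvol
    set NfC := ⨆ Q : DIdx 0, A Q with hNfC
    set T := ∑' R : DIdx 0, c R with hT
    have hNfconst : NLq 0 q f = fun _ => NfC := by
      funext x
      exact iSup_congr fun Q => iSup_pos (hmem0 x Q)
    have hTQ : ∀ Q : DIdx 0, (∑' R : {R : DIdx 0 // dcube 0 R ⊆ dcube 0 Q}, c R.1) = T :=
      fun Q => tsum_subtype_eq_of_support_subset fun R _ => hsub0 R Q
    have hCgconst : CrLq 0 r qtil g = fun _ => T ^ ρ⁻¹ := by
      funext x
      rw [CrLq]
      have hbody : ∀ Q : DIdx 0, (⨆ (_ : x ∈ dcube 0 Q), ((volume (dcube 0 Q))⁻¹ *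
          ∑' R : {R : DIdx 0 // dcube 0 R ⊆ dcube 0 Q}, volume (whit 0 R.1) *
            (volume (whit 0 R.1) ^ (-(1/qtil).toReal) *
              eLpNorm g qtil (volume.restrict (whit 0 R.1))) ^ r.toReal) ^ r.toReal⁻¹)
          = T ^ ρ⁻¹ := by
        intro Q
        rw [iSup_pos (hmem0 x Q), hvol1 Q, inv_one, one_mul]
        congr 1
        exact hTQ Q
      calc (⨆ Q : DIdx 0, ⨆ (_ : x ∈ dcube 0 Q), ((volume (dcube 0 Q))⁻¹ *
          ∑' R : {R : DIdx 0 // dcube 0 R ⊆ dcube 0 Q}, volume (whit 0 R.1) *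
            (volume (whit 0 R.1) ^ (-(1/qtil).toReal) *
              eLpNorm g qtil (volume.restrict (whit 0 R.1))) ^ r.toReal) ^ r.toReal⁻¹)
          = ⨆ _ : DIdx 0, T ^ ρ⁻¹ := iSup_congr hbody
        _ = T ^ ρ⁻¹ := iSup_const
    have heLp_p : eLp p (fun _ : EuclideanSpace ℝ (Fin 0) => NfC) volume = NfC := by
      rw [eLp, if_neg hptop, lintegral_const, hEvol, mul_one, ← ENNReal.rpow_mul,
        mul_inv_cancel₀ hptpos.ne', ENNReal.rpow_one]
    have heLp_ptil : eLp ptil (fun _ : EuclideanSpace ℝ (Fin 0) => T ^ ρ⁻¹) volume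
        = T ^ ρ⁻¹ := by
      rw [eLp]
      split_ifs with h
      · exact essSup_const _ hμ0
      · have hpttpos : 0 < ptil.toReal := ENNReal.toReal_pos hptil0 h
        rw [lintegral_const, hEvol, mul_one, ← ENNReal.rpow_mul,
          mul_inv_cancel₀ hpttpos.ne', ENNReal.rpow_one]
    have hsum : (∑' Q : DIdx 0, volume (whit 0 Q) * A Q ^ ρ * B Q ^ ρ) ≤ NfC ^ ρ * T := by
      calc (∑' Q : DIdx 0, volume (whit 0 Q) * A Q ^ ρ * B Q ^ ρ)
          = ∑' Q : DIdx 0, A Q ^ ρ * c Q := by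
            refine tsum_congr fun Q => ?_
            simp only [hc]
            ring
        _ ≤ ∑' Q : DIdx 0, NfC ^ ρ * c Q := ENNReal.tsum_le_tsum fun Q =>
            mul_le_mul_left (ENNReal.rpow_le_rpow (le_iSup A Q) hρnn) _
        _ = NfC ^ ρ * T := by rw [ENNReal.tsum_mul_left]
    rw [hLHS, hNfconst, hCgconst, heLp_p, heLp_ptil]
    calc (∫⁻ w in halfSpace 0, (‖f w * g w‖₊ : ℝ≥0∞) ^ ρ) ^ ρ⁻¹
        ≤ (NfC ^ ρ * T) ^ ρ⁻¹ :=
          ENNReal.rpow_le_rpow (hcore.trans hsum) (inv_nonneg.2 hρnn)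
      _ = NfC * T ^ ρ⁻¹ := by
          rw [ENNReal.mul_rpow_of_nonneg _ _ (inv_nonneg.2 hρnn), ← ENNReal.rpow_mul,
            mul_inv_cancel₀ hρ0, ENNReal.rpow_one]
  · -- n ≥ 1
    by_cases hCg0 : eLp ptil (CrLq n r qtil g) volume = 0
    · -- the Carleson functional vanishes a.e., hence `g` vanishes on all Whitney regions
      have hCgae : CrLq n r qtil g =ᵐ[volume] 0 := by
        rw [eLp] at hCg0
        split_ifs at hCg0 with h
        · have h2 := ENNReal.ae_le_essSup (μ := (volume : Measure (EuclideanSpace ℝ (Fin n)))) (CrLq n r qtil g)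
          rw [hCg0] at h2
          filter_upwards [h2] with x hx
          simpa using hx
        · have hpttpos : 0 < ptil.toReal := ENNReal.toReal_pos hptil0 h
          have hint : (∫⁻ x, CrLq n r qtil g x ^ ptil.toReal) = 0 := by
            by_contra hne
            rw [ENNReal.rpow_eq_zero_iff] at hCg0
            rcases hCg0 with ⟨h1, _⟩ | ⟨_, h2⟩
            · exact hne h1
            · have := inv_pos.2 hpttpos
              linarith
          have h3 := (lintegral_eq_zero_iff
            (ENNReal.continuous_rpow_const.measurable.comp
              (measurable_CrLq r qtil g))).1 hint
          filter_upwards [h3] with x hx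
          simp only [Function.comp_apply, Pi.zero_apply] at hx ⊢
          rw [ENNReal.rpow_eq_zero_iff] at hx
          rcases hx with ⟨h1, _⟩ | ⟨_, h2⟩
          · exact h1
          · linarith
      have hgz : ∀ Q : DIdx n, (fun w => f w * g w) =ᵐ[volume.restrict (whit n Q)] 0 := by
        intro Q
        obtain ⟨x, hx, hx0⟩ := exists_zero_on_cube hCgae Q
        have hbody := hCg_ge x Q hx
        rw [hx0] at hbody
        have h1 := le_zero_iff.1 hbody
        rw [ENNReal.rpow_eq_zero_iff] at h1
        have h2 : (volume (dcube n Q))⁻¹ *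
            (∑' R : {R : DIdx n // dcube n R ⊆ dcube n Q}, c R.1) = 0 := by
          rcases h1 with ⟨h1', _⟩ | ⟨_, h1'⟩
          · exact h1'
          · exfalso
            have := inv_pos.2 hρpos
            linarith
        have h3 : (∑' R : {R : DIdx n // dcube n R ⊆ dcube n Q}, c R.1) = 0 := by
          rcases mul_eq_zero.1 h2 with h' | h'
          · exact absurd h' (ENNReal.inv_ne_zero.2 (volume_dcube_ne_top Q))
          · exact h'
        have h4 : c Q = 0 := ENNReal.tsum_eq_zero.1 h3 ⟨Q, subset_rfl⟩
        have h5 : B Q = 0 := by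
          simp only [hc] at h4
          rcases mul_eq_zero.1 h4 with h' | h'
          · exact absurd h' (volume_whit_pos Q).ne'
          · rw [ENNReal.rpow_eq_zero_iff] at h'
            rcases h' with ⟨h'', _⟩ | ⟨_, h''⟩
            · exact h''
            · linarith
        have h6 : eLpNorm g qtil (volume.restrict (whit n Q)) = 0 := by
          simp only [hB] at h5
          rcases mul_eq_zero.1 h5 with h' | h'
          · exfalso
            rw [ENNReal.rpow_eq_zero_iff] at h'
            rcases h' with ⟨h'', _⟩ | ⟨h'', _⟩
            · exact (volume_whit_pos Q).ne' h''
            · exact volume_whit_ne_top Q h''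
          · exact h'
        have h7 : g =ᵐ[volume.restrict (whit n Q)] 0 :=
          (eLpNorm_eq_zero_iff hg.aestronglyMeasurable hqtil0).1 h6
        filter_upwards [h7] with w hw
        rw [Pi.zero_apply] at hw ⊢
        rw [hw, mul_zero]
      rw [lhs_zero hr0 hrtop hgz]
      exact zero_le
    by_cases hNf0 : eLp p (NLq n q f) volume = 0
    · have hNfae : NLq n q f =ᵐ[volume] 0 := by
        rw [eLp, if_neg hptop] at hNf0
        have hint : (∫⁻ x, NLq n q f x ^ pt) = 0 := by
          by_contra hne
          rw [ENNReal.rpow_eq_zero_iff] at hNf0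
          rcases hNf0 with ⟨h1, _⟩ | ⟨_, h2⟩
          · exact hne h1
          · have := inv_pos.2 hptpos
            linarith
        have h3 := (lintegral_eq_zero_iff
          (ENNReal.continuous_rpow_const.measurable.comp (measurable_NLq q f))).1 hint
        filter_upwards [h3] with x hx
        simp only [Function.comp_apply, Pi.zero_apply] at hx ⊢
        rw [ENNReal.rpow_eq_zero_iff] at hx
        rcases hx with ⟨h1, _⟩ | ⟨_, h2⟩
        · exact h1
        · linarith
      have hfz : ∀ Q : DIdx n, (fun w => f w * g w) =ᵐ[volume.restrict (whit n Q)] 0 := by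
        intro Q
        obtain ⟨x, hx, hx0⟩ := exists_zero_on_cube hNfae Q
        have hbody := hNf_ge x Q hx
        rw [hx0] at hbody
        have h1 := le_zero_iff.1 hbody
        have h6 : eLpNorm f q (volume.restrict (whit n Q)) = 0 := by
          simp only [hA] at h1
          rcases mul_eq_zero.1 h1 with h' | h'
          · exfalso
            rw [ENNReal.rpow_eq_zero_iff] at h'
            rcases h' with ⟨h'', _⟩ | ⟨h'', _⟩
            · exact (volume_whit_pos Q).ne' h''
            · exact volume_whit_ne_top Q h''
          · exact h'
        have h7 : f =ᵐ[volume.restrict (whit n Q)] 0 :=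
          (eLpNorm_eq_zero_iff hf.aestronglyMeasurable hq0).1 h6
        filter_upwards [h7] with w hw
        rw [Pi.zero_apply] at hw ⊢
        rw [hw, zero_mul]
      rw [lhs_zero hr0 hrtop hfz]
      exact zero_le
    by_cases hNftop : eLp p (NLq n q f) volume = ∞
    · have : eLp p (NLq n q f) volume * eLp ptil (CrLq n r qtil g) volume = ∞ :=
        ENNReal.mul_eq_top.2 (Or.inr ⟨hNftop, hCg0⟩)
      rw [this]
      exact le_top
    by_cases hCgtop : eLp ptil (CrLq n r qtil g) volume = ∞
    · have : eLp p (NLq n q f) volume * eLp ptil (CrLq n r qtil g) volume = ∞ :=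
        ENNReal.mul_eq_top.2 (Or.inl ⟨hNf0, hCgtop⟩)
      rw [this]
      exact le_top
    -- main case
    set Nf := NLq n q f with hNfdef
    set Cg := CrLq n r qtil g with hCgdef
    have hNfm : Measurable Nf := measurable_NLq q f
    have hCgm : Measurable Cg := measurable_CrLq r qtil g
    have hhm : Measurable fun x => Nf x ^ ρ :=
      ENNReal.continuous_rpow_const.measurable.comp hNfm
    have hkm : Measurable fun x => Cg x ^ ρ :=
      ENNReal.continuous_rpow_const.measurable.comp hCgm
    have hptm : Measurable fun x => Nf x ^ pt :=
      ENNReal.continuous_rpow_const.measurable.comp hNfm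
    have hIpt : (∫⁻ x, Nf x ^ pt) ≠ ∞ := by
      intro htop
      rw [eLp, if_neg hptop, htop] at hNftop
      exact hNftop (ENNReal.top_rpow_of_pos (inv_pos.2 hptpos))
    set a : DIdx n → ℝ≥0∞ := fun Q => ⨅ x ∈ dcube n Q, Nf x ^ ρ with ha
    have hstep2 : ∀ Q : DIdx n, volume (whit n Q) * A Q ^ ρ * B Q ^ ρ ≤ a Q * c Q := by
      intro Q
      have h1 : A Q ^ ρ ≤ a Q := by
        refine le_iInf fun x => le_iInf fun hx => ?_
        exact ENNReal.rpow_le_rpow (hNf_ge x Q hx) hρnn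
      calc volume (whit n Q) * A Q ^ ρ * B Q ^ ρ = A Q ^ ρ * c Q := by
            simp only [hc]
            ring
        _ ≤ a Q * c Q := mul_le_mul_left h1 _
    have hstep3 : ∀ Q : DIdx n, a Q * c Q =
        ∫⁻ l : ℝ, {l' : ℝ | 0 < l' ∧ ENNReal.ofReal l' < a Q}.indicator (fun _ => c Q) l := by
      intro Q
      rw [lintegral_indicator (measurableSet_layer (a Q)) _, setLIntegral_const,
        volume_layer, mul_comm]
    set U : Set (ℝ × EuclideanSpace ℝ (Fin n)) :=
      {w | 0 < w.1 ∧ ENNReal.ofReal w.1 < Nf w.2 ^ ρ} with hU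
    have hUmeas : MeasurableSet U := by
      have h1 : MeasurableSet {w : ℝ × EuclideanSpace ℝ (Fin n) | 0 < w.1} :=
        measurable_fst measurableSet_Ioi
      have h2 : MeasurableSet {w : ℝ × EuclideanSpace ℝ (Fin n) |
          ENNReal.ofReal w.1 < Nf w.2 ^ ρ} :=
        measurableSet_lt (ENNReal.measurable_ofReal.comp measurable_fst)
          (hhm.comp measurable_snd)
      exact h1.inter h2
    set G : ℝ → EuclideanSpace ℝ (Fin n) → ℝ≥0∞ :=
      fun l x => U.indicator (fun w => Cg w.2 ^ ρ) (l, x) with hG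
    have hk : ∀ P : DIdx n, ∀ x ∈ dcube n P,
        (volume (dcube n P))⁻¹ * (∑' R : {R : DIdx n // dcube n R ⊆ dcube n P}, c R.1)
          ≤ Cg x ^ ρ := by
      intro P x hx
      have h2 := ENNReal.rpow_le_rpow (hCg_ge x P hx) hρnn
      rwa [← ENNReal.rpow_mul, inv_mul_cancel₀ hρ0, ENNReal.rpow_one] at h2
    have hstep4 : ∀ l : ℝ,
        (∑' Q : DIdx n, {l' : ℝ | 0 < l' ∧ ENNReal.ofReal l' < a Q}.indicator
          (fun _ => c Q) l) ≤ ∫⁻ x, G l x := by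
      intro l
      rcases le_or_gt l 0 with hl | hl
      · have h0 : ∀ Q : DIdx n, {l' : ℝ | 0 < l' ∧ ENNReal.ofReal l' < a Q}.indicator
            (fun _ => c Q) l = 0 := by
          intro Q
          apply Set.indicator_of_notMem
          intro hmem
          exact absurd hmem.1 (not_lt.2 hl)
        rw [tsum_congr h0]
        simp
      · set Ω : Set (EuclideanSpace ℝ (Fin n)) := {x | ENNReal.ofReal l < Nf x ^ ρ} with hΩ
        have hΩmeas : MeasurableSet Ω := measurableSet_lt measurable_const hhm
        have hΩfin : volume Ω ≠ ∞ := by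
          set ε : ℝ≥0∞ := ENNReal.ofReal l ^ (pt / ρ) with hε
          have hl' : 0 < ENNReal.ofReal l := ENNReal.ofReal_pos.2 hl
          have hε0 : ε ≠ 0 := by
            rw [hε, Ne, ENNReal.rpow_eq_zero_iff]
            rintro (⟨h1, _⟩ | ⟨h1, _⟩)
            · exact hl'.ne' h1
            · exact ENNReal.ofReal_ne_top h1
          have hsub : Ω ⊆ {x | ε ≤ Nf x ^ pt} := by
            intro x hx
            have h1 : ε ≤ (Nf x ^ ρ) ^ (pt/ρ) :=
              ENNReal.rpow_le_rpow (le_of_lt hx) (by positivity)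
            have h2 : (Nf x ^ ρ) ^ (pt/ρ) = Nf x ^ pt := by
              rw [← ENNReal.rpow_mul]
              congr 1
              field_simp
            exact le_trans h1 (le_of_eq h2)
          have hcheb := mul_meas_ge_le_lintegral₀
            (μ := (volume : Measure (EuclideanSpace ℝ (Fin n))))
            (f := fun x => Nf x ^ pt) hptm.aemeasurable ε
          intro htop
          have h3 : volume {x | ε ≤ Nf x ^ pt} = ∞ :=
            top_le_iff.1 (htop ▸ measure_mono hsub)
          rw [h3, ENNReal.mul_top hε0] at hcheb
          exact hIpt (top_le_iff.1 hcheb)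
        have hsupp : Function.support (fun Q : DIdx n =>
            {l' : ℝ | 0 < l' ∧ ENNReal.ofReal l' < a Q}.indicator (fun _ => c Q) l) ⊆
            {Q : DIdx n | dcube n Q ⊆ Ω} := by
          intro Q hQ
          have hmem : l ∈ {l' : ℝ | 0 < l' ∧ ENNReal.ofReal l' < a Q} := by
            by_contra hnm
            exact hQ (Set.indicator_of_notMem hnm _)
          intro x hx
          exact lt_of_lt_of_le hmem.2 (iInf₂_le x hx)
        calc (∑' Q : DIdx n, {l' : ℝ | 0 < l' ∧ ENNReal.ofReal l' < a Q}.indicator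
              (fun _ => c Q) l)
            = ∑' Q : {Q : DIdx n | dcube n Q ⊆ Ω},
                {l' : ℝ | 0 < l' ∧ ENNReal.ofReal l' < a Q.1}.indicator (fun _ => c Q.1) l :=
              (tsum_subtype_eq_of_support_subset hsupp).symm
          _ ≤ ∑' Q : {Q : DIdx n // dcube n Q ⊆ Ω}, c Q.1 :=
              ENNReal.tsum_le_tsum fun Q => Set.indicator_le_self _ _ l
          _ ≤ ∫⁻ x in Ω, Cg x ^ ρ := carleson_embed hn c _ hΩfin hk
          _ = ∫⁻ x, G l x := by
              rw [← lintegral_indicator hΩmeas]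
              refine lintegral_congr fun x => ?_
              show Ω.indicator (fun x => Cg x ^ ρ) x = U.indicator (fun w => Cg w.2 ^ ρ) (l, x)
              by_cases hx : x ∈ Ω
              · rw [Set.indicator_of_mem hx, Set.indicator_of_mem (show (l, x) ∈ U from ⟨hl, hx⟩)]
              · rw [Set.indicator_of_notMem hx, Set.indicator_of_notMem
                  (show (l, x) ∉ U from fun hmem => hx hmem.2)]
    have hstep5 : (∑' Q : DIdx n, a Q * c Q) ≤ ∫⁻ x, Nf x ^ ρ * Cg x ^ ρ := by
      calc (∑' Q : DIdx n, a Q * c Q)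
          = ∑' Q : DIdx n, ∫⁻ l : ℝ,
              {l' : ℝ | 0 < l' ∧ ENNReal.ofReal l' < a Q}.indicator (fun _ => c Q) l :=
            tsum_congr hstep3
        _ = ∫⁻ l : ℝ, ∑' Q : DIdx n,
              {l' : ℝ | 0 < l' ∧ ENNReal.ofReal l' < a Q}.indicator (fun _ => c Q) l :=
            (lintegral_tsum fun Q =>
              (measurable_const.indicator (measurableSet_layer _)).aemeasurable).symm
        _ ≤ ∫⁻ l : ℝ, ∫⁻ x, G l x := lintegral_mono hstep4
        _ = ∫⁻ x, ∫⁻ l : ℝ, G l x := by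
            refine lintegral_lintegral_swap ?_
            exact (((hkm.comp measurable_snd).indicator hUmeas)).aemeasurable
        _ = ∫⁻ x, Nf x ^ ρ * Cg x ^ ρ := by
            refine lintegral_congr fun x => ?_
            have h1 : ∀ l : ℝ, G l x =
                {l' : ℝ | 0 < l' ∧ ENNReal.ofReal l' < Nf x ^ ρ}.indicator
                  (fun _ => Cg x ^ ρ) l := by
              intro l
              show U.indicator (fun w => Cg w.2 ^ ρ) (l, x) = _
              by_cases hl : l ∈ {l' : ℝ | 0 < l' ∧ ENNReal.ofReal l' < Nf x ^ ρ}
              · rw [Set.indicator_of_mem hl, Set.indicator_of_mem (show (l, x) ∈ U from hl)]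
              · rw [Set.indicator_of_notMem hl, Set.indicator_of_notMem
                  (show (l, x) ∉ U from hl)]
            rw [lintegral_congr h1, lintegral_indicator (measurableSet_layer _) _,
              setLIntegral_const, volume_layer]
            exact mul_comm _ _
    have hHolder2 : (∫⁻ x, Nf x ^ ρ * Cg x ^ ρ) ≤
        (eLp p Nf volume) ^ ρ * (eLp ptil Cg volume) ^ ρ := by
      by_cases hpr : p = r
      · have hptil_top : ptil = ∞ := by
          rw [hpr] at hpconj
          have h1 : 1/r + 1/ptil = 1/r + 0 := by rw [hpconj, add_zero]
          have h2 : 1/ptil = 0 := (ENNReal.add_right_inj (by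
            rw [one_div]
            exact ENNReal.inv_ne_top.2 hr0)).1 h1
          rwa [one_div, ENNReal.inv_eq_zero] at h2
        have hS : eLp ptil Cg volume = essSup Cg volume := by rw [eLp, if_pos hptil_top]
        have hStop : essSup Cg volume ≠ ∞ := by
          rw [← hS]
          exact hCgtop
        have hρpt : ρ = pt := by rw [hρdef, hptdef, hpr]
        have h1 : (∫⁻ x, Nf x ^ ρ * Cg x ^ ρ) ≤
            (∫⁻ x, Nf x ^ ρ) * (essSup Cg volume) ^ ρ := by
          rw [← lintegral_mul_const' _ _ (ENNReal.rpow_ne_top_of_nonneg hρnn hStop)]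
          refine lintegral_mono_ae ?_
          filter_upwards [ENNReal.ae_le_essSup
            (μ := (volume : Measure (EuclideanSpace ℝ (Fin n)))) Cg] with x hx
          exact mul_le_mul_right (ENNReal.rpow_le_rpow hx hρnn) _
        have h2 : (eLp p Nf volume) ^ ρ = ∫⁻ x, Nf x ^ ρ := by
          rw [eLp, if_neg hptop, ← ENNReal.rpow_mul, hρpt, inv_mul_cancel₀ hptpos.ne',
            ENNReal.rpow_one]
        rw [h2, hS]
        exact h1
      · have hrltp : r < p := lt_of_le_of_ne hrp (fun h => hpr h.symm)
        have hptiltop : ptil ≠ ∞ := by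
          intro h
          rw [h] at hpconj
          have h1 : 1/p = 1/r := by
            rw [← hpconj]
            simp
          rw [one_div, one_div, inv_inj] at h1
          exact hpr h1
        set ptt := ptil.toReal with hpttdef
        have hpttpos : 0 < ptt := ENNReal.toReal_pos hptil0 hptiltop
        have hsum_inv : pt⁻¹ + ptt⁻¹ = ρ⁻¹ := by
          have h1 : (1/p).toReal + (1/ptil).toReal = (1/r).toReal := by
            rw [← ENNReal.toReal_add (by simp [hp0]) (by simp [hptil0]), hpconj]
          simpa [one_div, ENNReal.toReal_inv] using h1
        set s := pt / ρ with hs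
        set s' := ptt / ρ with hs'
        have hconj : Real.HolderConjugate s s' := by
          rw [Real.holderConjugate_iff]
          constructor
          · rw [hs, lt_div_iff₀ hρpos, one_mul]
            rw [hρdef, hptdef]
            exact (ENNReal.toReal_lt_toReal hrtop hptop).2 hrltp
          · rw [hs, hs']
            have h2 := hsum_inv
            field_simp at h2 ⊢
            linarith
        have hH := ENNReal.lintegral_mul_le_Lp_mul_Lq volume hconj
          hhm.aemeasurable hkm.aemeasurable
        have hL : (∫⁻ x, (Nf x ^ ρ) ^ s) = ∫⁻ x, Nf x ^ pt := by
          refine lintegral_congr fun x => ?_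
          rw [← ENNReal.rpow_mul]
          congr 1
          rw [hs]
          field_simp
        have hR : (∫⁻ x, (Cg x ^ ρ) ^ s') = ∫⁻ x, Cg x ^ ptt := by
          refine lintegral_congr fun x => ?_
          rw [← ENNReal.rpow_mul]
          congr 1
          rw [hs']
          field_simp
        have hE1 : (∫⁻ x, Nf x ^ pt) ^ (1/s) = (eLp p Nf volume) ^ ρ := by
          rw [eLp, if_neg hptop, ← ENNReal.rpow_mul]
          congr 1
          rw [hs]
          field_simp
          exact (div_self hptpos.ne').symm
        have hE2 : (∫⁻ x, Cg x ^ ptt) ^ (1/s') = (eLp ptil Cg volume) ^ ρ := by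
          rw [eLp, if_neg hptiltop, ← ENNReal.rpow_mul]
          congr 1
          rw [hs']
          field_simp
          exact (div_self hpttpos.ne').symm
        calc (∫⁻ x, Nf x ^ ρ * Cg x ^ ρ)
            = ∫⁻ x, ((fun x => Nf x ^ ρ) * fun x => Cg x ^ ρ) x := rfl
          _ ≤ (∫⁻ x, (Nf x ^ ρ) ^ s) ^ (1/s) * (∫⁻ x, (Cg x ^ ρ) ^ s') ^ (1/s') := hH
          _ = (eLp p Nf volume) ^ ρ * (eLp ptil Cg volume) ^ ρ := by
              rw [hL, hR, hE1, hE2]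
    calc eLpNorm (fun w => f w * g w) r (volume.restrict (halfSpace n))
        = (∫⁻ w in halfSpace n, (‖f w * g w‖₊ : ℝ≥0∞) ^ ρ) ^ ρ⁻¹ := hLHS
      _ ≤ ((eLp p Nf volume) ^ ρ * (eLp ptil Cg volume) ^ ρ) ^ ρ⁻¹ := by
          refine ENNReal.rpow_le_rpow ?_ (inv_nonneg.2 hρnn)
          calc (∫⁻ w in halfSpace n, (‖f w * g w‖₊ : ℝ≥0∞) ^ ρ)
              ≤ ∑' Q : DIdx n, volume (whit n Q) * A Q ^ ρ * B Q ^ ρ := hcore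
            _ ≤ ∑' Q : DIdx n, a Q * c Q := ENNReal.tsum_le_tsum hstep2
            _ ≤ ∫⁻ x, Nf x ^ ρ * Cg x ^ ρ := hstep5
            _ ≤ _ := hHolder2
      _ = eLp p Nf volume * eLp ptil Cg volume := by
          rw [← ENNReal.mul_rpow_of_nonneg _ _ hρnn, ← ENNReal.rpow_mul,
            mul_inv_cancel₀ hρ0, ENNReal.rpow_one]

end
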